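/- Let A : Fin n → Fin n → Fin 3 → ℕ be paired-comparison data with symmetry A i j k = A j i (2 - k). Define the undirected graph G_M with an edge between i and j iff A i j 1 > 0 or (A i j 0 > 0 and A i j 2 > 0). Define SC3: for every nonempty proper subset S of Fin n, either there are i₂, i₃ ∈ S, j₂, j₃ ∉ S with A i₂ j₂ 2 > 0 and A i₃ j₃ 0 > 0, or there are i₄ ∈ S, j₄ ∉ S with A i₄ j₄ 1 > 0. Then connectedness of G_M implies SC3. -/
import Mathlib

lemma cross_edge {α : Type*} {r : α → α → Prop} {S : Finset α} {x y : α}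
    (h : Relation.ReflTransGen r x y) (hx : x ∈ S) (hy : y ∉ S) :
    ∃ a ∈ S, ∃ b ∉ S, r a b := by
  induction h with
  | refl => exact absurd hx hy
  | tail h₁ h₂ ih =>
    rename_i b c
    by_cases hb : b ∈ S
    · exact ⟨b, hb, c, hy, h₂⟩
    · exact ih hb

theorem MC3_implies_SC3
    (n : ℕ) (hn : 2 ≤ n) (A : Fin n → Fin n → Fin 3 → ℕ)
    (hsym : ∀ i j k, A i j k = A j i (2 - k))
    (hdiag : ∀ i k, A i i k = 0)
    (hMC3 : ∀ i j : Fin n,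
      Relation.ReflTransGen (fun a b => 0 < A a b 1 ∨ (0 < A a b 0 ∧ 0 < A a b 2)) i j) :
    ∀ S : Finset (Fin n), S.Nonempty → S ≠ Finset.univ →
      ((∃ i₂ ∈ S, ∃ j₂ ∉ S, 0 < A i₂ j₂ 2) ∧ (∃ i₃ ∈ S, ∃ j₃ ∉ S, 0 < A i₃ j₃ 0)) ∨
      (∃ i₄ ∈ S, ∃ j₄ ∉ S, 0 < A i₄ j₄ 1) := by
  intro S hS hSne
  obtain ⟨x, hx⟩ := hS
  obtain ⟨y, hy⟩ : ∃ y, y ∉ S := by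
    by_contra h
    push_neg at h
    exact hSne (Finset.eq_univ_iff_forall.mpr h)
  obtain ⟨a, ha, b, hb, hr⟩ := cross_edge (hMC3 x y) hx hy
  rcases hr with h1 | ⟨h0, h2⟩
  · exact Or.inr ⟨a, ha, b, hb, h1⟩
  · exact Or.inl ⟨⟨a, ha, b, hb, h2⟩, ⟨a, ha, b, hb, h0⟩⟩
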